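/- arXiv:2303.15905 — 3 statements merged into one kernel-verified Lean document; each statement's English description precedes it below -/
import Mathlib

section
/- Let m, l be natural numbers and consider the ℂ*-action on ℂ^{m+1} × ℂ^{l+1} given by t·(u,w) = (t•u, t⁻¹•w). For a point (u,w) ∈ ℂ^{m+1} × ℂ^{l+1}, the limit of t·(u,w) as t → 0 (t ranging over nonzero complex numbers) exists if and only if w = 0; and when w = 0 this limit equals the origin (0,0). -/
open Filter Topology

lemma smul_tendsto_zero (m : ℕ) (u : Fin (m + 1) → ℂ) :
    Tendsto (fun t : ℂ => t • u) (𝓝[≠] 0) (𝓝 0) := by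
  have h : Tendsto (fun t : ℂ => t • u) (𝓝 0) (𝓝 ((0 : ℂ) • u)) :=
    (continuous_id.smul continuous_const).tendsto 0
  rw [zero_smul] at h
  exact h.mono_left nhdsWithin_le_nhds

/-- For the ℂ*-action `t · (u, w) = (t • u, t⁻¹ • w)` on `ℂ^{m+1} × ℂ^{l+1}`, the limit
as `t → 0` exists iff `w = 0`, and in that case the limit is the origin. -/
theorem limit_exists_at_zero_iff_snd_eq_zero (m l : ℕ)
    (u : Fin (m + 1) → ℂ) (w : Fin (l + 1) → ℂ) :
    ((∃ p : (Fin (m + 1) → ℂ) × (Fin (l + 1) → ℂ),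
        Tendsto (fun t : ℂ => (t • u, t⁻¹ • w)) (𝓝[≠] 0) (𝓝 p)) ↔ w = 0) ∧
    (w = 0 →
      Tendsto (fun t : ℂ => (t • u, t⁻¹ • w)) (𝓝[≠] 0)
        (𝓝 ((0, 0) : (Fin (m + 1) → ℂ) × (Fin (l + 1) → ℂ)))) := by
  constructor
  · constructor
    · rintro ⟨p, hp⟩
      funext i
      -- second coordinate at index i tends to p.2 i
      have h2 : Tendsto (fun t : ℂ => t⁻¹ * w i) (𝓝[≠] 0) (𝓝 (p.2 i)) := by
        have := ((continuous_apply i).tendsto p.2).comp ((continuous_snd.tendsto p).comp hp)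
        simpa [Function.comp_def, Pi.smul_apply, smul_eq_mul] using this
      have ht : Tendsto (fun t : ℂ => t) (𝓝[≠] 0) (𝓝 0) :=
        tendsto_id.mono_left nhdsWithin_le_nhds
      have hmul : Tendsto (fun t : ℂ => t * (t⁻¹ * w i)) (𝓝[≠] 0) (𝓝 (0 * p.2 i)) :=
        ht.mul h2
      have heq : ∀ᶠ t : ℂ in 𝓝[≠] 0, t * (t⁻¹ * w i) = w i := by
        filter_upwards [self_mem_nhdsWithin] with t ht'
        have ht0 : t ≠ 0 := ht'
        rw [← mul_assoc, mul_inv_cancel₀ ht0, one_mul]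
      have hconst : Tendsto (fun _ : ℂ => w i) (𝓝[≠] 0) (𝓝 (0 * p.2 i)) :=
        hmul.congr' heq
      have : w i = 0 * p.2 i := tendsto_nhds_unique tendsto_const_nhds hconst
      simpa using this
    · intro hw
      subst hw
      refine ⟨(0, 0), ?_⟩
      refine Tendsto.prodMk_nhds (smul_tendsto_zero m u) ?_
      simp only [smul_zero]
      exact (tendsto_const_nhds :
        Tendsto (fun _ : ℂ => (0 : Fin (l + 1) → ℂ)) (𝓝[≠] 0) (𝓝 0))
  · intro hw
    subst hw
    refine Tendsto.prodMk_nhds (smul_tendsto_zero m u) ?_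
    simp only [smul_zero]
    exact (tendsto_const_nhds :
      Tendsto (fun _ : ℂ => (0 : Fin (l + 1) → ℂ)) (𝓝[≠] 0) (𝓝 0))
end

section
/- Let m, l be natural numbers and let R = MvPolynomial (Fin (m+1) ⊕ Fin (l+1)) ℂ, with variables y_i = X (Sum.inl i) and x_j = X (Sum.inr j). For each nonzero t ∈ ℂ let σ_t : R → R be the ℂ-algebra endomorphism determined by y_i ↦ t • y_i and x_j ↦ t⁻¹ • x_j. Then the set of polynomials p ∈ R satisfying σ_t p = p for all nonzero t ∈ ℂ equals the ℂ-subalgebra generated by the products {y_i * x_j : i ∈ Fin (m+1), j ∈ Fin (l+1)}. -/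
open MvPolynomial

private theorem aeval_diag_monomial {n : Type*} [Fintype n] (g : n → ℂ) (d : n →₀ ℕ) (c : ℂ) :
    aeval (fun s => g s • (X s : MvPolynomial n ℂ)) (monomial d c)
      = (∏ s, g s ^ d s) • monomial d c := by
  rw [aeval_monomial]
  simp only [smul_pow, Algebra.smul_def, map_prod, mul_pow, map_pow]
  rw [Finsupp.prod_fintype _ _ (by simp), Finset.prod_mul_distrib]
  rw [monomial_eq (R := ℂ), Finsupp.prod_fintype _ _ (by simp)]
  simp only [algebraMap_eq]
  ring

private theorem mem_adjoin_of_balanced (m l : ℕ) (n : ℕ) :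
    ∀ (d : Fin (m + 1) ⊕ Fin (l + 1) →₀ ℕ) (c : ℂ),
      (∑ i, d (Sum.inl i)) = n → (∑ j, d (Sum.inr j)) = n →
      monomial d c ∈ Algebra.adjoin ℂ
        {q : MvPolynomial (Fin (m + 1) ⊕ Fin (l + 1)) ℂ |
          ∃ (i : Fin (m + 1)) (j : Fin (l + 1)),
            q = X (Sum.inl i) * X (Sum.inr j)} := by
  induction n with
  | zero =>
    intro d c h1 h2
    have hd : d = 0 := by
      ext s
      cases s with
      | inl i =>
        have := Finset.sum_eq_zero_iff.mp h1 i (Finset.mem_univ i)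
        simpa using this
      | inr j =>
        have := Finset.sum_eq_zero_iff.mp h2 j (Finset.mem_univ j)
        simpa using this
    rw [hd]
    have : (monomial (0 : Fin (m + 1) ⊕ Fin (l + 1) →₀ ℕ)) c = C c := by
      simp [monomial_zero']
    rw [this, ← algebraMap_eq]
    exact Subalgebra.algebraMap_mem _ c
  | succ n ih =>
    intro d c h1 h2
    obtain ⟨i, hi⟩ : ∃ i, d (Sum.inl i) ≠ 0 := by
      by_contra h
      push_neg at h
      simp [h] at h1
    obtain ⟨j, hj⟩ : ∃ j, d (Sum.inr j) ≠ 0 := by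
      by_contra h
      push_neg at h
      simp [h] at h2
    set e : Fin (m + 1) ⊕ Fin (l + 1) →₀ ℕ :=
      d - Finsupp.single (Sum.inl i) 1 - Finsupp.single (Sum.inr j) 1 with he
    have hde : d = e + Finsupp.single (Sum.inl i) 1 + Finsupp.single (Sum.inr j) 1 := by
      ext s
      simp only [he, Finsupp.coe_add, Finsupp.coe_tsub, Pi.add_apply, Pi.sub_apply]
      rcases s with s | s
      · have hja : (Finsupp.single (Sum.inr j) 1 :
            Fin (m + 1) ⊕ Fin (l + 1) →₀ ℕ) (Sum.inl s) = 0 := by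
          simp [Finsupp.single_apply]
        rcases eq_or_ne i s with rfl | h
        · simp only [hja, Finsupp.single_eq_same]
          omega
        · have : (Finsupp.single (Sum.inl i) 1 :
              Fin (m + 1) ⊕ Fin (l + 1) →₀ ℕ) (Sum.inl s) = 0 := by
            simp [Finsupp.single_apply, h]
          simp [this, hja]
      · have hia : (Finsupp.single (Sum.inl i) 1 :
            Fin (m + 1) ⊕ Fin (l + 1) →₀ ℕ) (Sum.inr s) = 0 := by
          simp [Finsupp.single_apply]
        rcases eq_or_ne j s with rfl | h
        · simp only [hia, Finsupp.single_eq_same]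
          omega
        · have : (Finsupp.single (Sum.inr j) 1 :
              Fin (m + 1) ⊕ Fin (l + 1) →₀ ℕ) (Sum.inr s) = 0 := by
            simp [Finsupp.single_apply, h]
          simp [this, hia]
    have he1 : (∑ i', e (Sum.inl i')) = n := by
      have : (∑ i', d (Sum.inl i')) = (∑ i', e (Sum.inl i')) + 1 := by
        rw [hde]
        simp [Finsupp.single_apply, Finset.sum_add_distrib, Finset.sum_ite_eq]
      omega
    have he2 : (∑ j', e (Sum.inr j')) = n := by
      have : (∑ j', d (Sum.inr j')) = (∑ j', e (Sum.inr j')) + 1 := by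
        rw [hde]
        simp [Finsupp.single_apply, Finset.sum_add_distrib, Finset.sum_ite_eq]
      omega
    have hmul : (monomial d) c =
        (X (Sum.inl i) * X (Sum.inr j)) * monomial e c := by
      rw [hde, X, X, monomial_mul, monomial_mul]
      rw [monomial_eq_monomial_iff]
      left
      constructor
      · abel
      · ring
    rw [hmul]
    exact mul_mem (Algebra.subset_adjoin ⟨i, j, rfl⟩) (ih e c he1 he2)

/-- The invariant ring of the ℂ*-action `y_i ↦ t • y_i`, `x_j ↦ t⁻¹ • x_j` on
`ℂ[y_0, …, y_m, x_0, …, x_l]` is the subalgebra generated by the products `y_i * x_j`. -/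
theorem invariant_ring_eq_adjoin_products (m l : ℕ) :
    {p : MvPolynomial (Fin (m + 1) ⊕ Fin (l + 1)) ℂ |
      ∀ t : ℂ, t ≠ 0 →
        aeval (Sum.elim (fun i : Fin (m + 1) => t • (X (Sum.inl i) :
            MvPolynomial (Fin (m + 1) ⊕ Fin (l + 1)) ℂ))
          (fun j : Fin (l + 1) => t⁻¹ • X (Sum.inr j))) p = p} =
    ↑(Algebra.adjoin ℂ
      {q : MvPolynomial (Fin (m + 1) ⊕ Fin (l + 1)) ℂ |
        ∃ (i : Fin (m + 1)) (j : Fin (l + 1)),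
          q = X (Sum.inl i) * X (Sum.inr j)}) := by
  have helim : ∀ t : ℂ,
      (Sum.elim (fun i : Fin (m + 1) => t • (X (Sum.inl i) :
            MvPolynomial (Fin (m + 1) ⊕ Fin (l + 1)) ℂ))
          (fun j : Fin (l + 1) => t⁻¹ • X (Sum.inr j)))
      = fun s => (Sum.elim (fun _ : Fin (m+1) => t) (fun _ : Fin (l+1) => t⁻¹)) s • X s := by
    intro t; funext s; cases s <;> rfl
  have key : ∀ (t : ℂ) (d : Fin (m + 1) ⊕ Fin (l + 1) →₀ ℕ) (c : ℂ),
      aeval (Sum.elim (fun i : Fin (m + 1) => t • (X (Sum.inl i) :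
            MvPolynomial (Fin (m + 1) ⊕ Fin (l + 1)) ℂ))
          (fun j : Fin (l + 1) => t⁻¹ • X (Sum.inr j))) (monomial d c)
      = (t ^ (∑ i, d (Sum.inl i)) * t⁻¹ ^ (∑ j, d (Sum.inr j))) • monomial d c := by
    intro t d c
    rw [helim, aeval_diag_monomial]
    congr 1
    rw [Fintype.prod_sum_type]
    simp [Finset.prod_pow_eq_pow_sum]
  ext p
  simp only [Set.mem_setOf_eq, SetLike.mem_coe]
  constructor
  · intro hp
    have h2 := hp 2 two_ne_zero
    conv_lhs at h2 => rw [p.as_sum]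
    rw [map_sum] at h2
    simp only [key] at h2
    rw [p.as_sum]
    apply Subalgebra.sum_mem
    intro d hd
    have hw : (∑ i, d (Sum.inl i)) = (∑ j, d (Sum.inr j)) := by
      have hc := congrArg (coeff d) h2
      rw [coeff_sum] at hc
      simp only [coeff_smul, coeff_monomial, smul_eq_mul, mul_ite, mul_zero] at hc
      rw [Finset.sum_ite_eq' p.support d
        (fun d' => ((2:ℂ) ^ (∑ i, d' (Sum.inl i)) * (2:ℂ)⁻¹ ^ (∑ j, d' (Sum.inr j)))
          * coeff d' p)] at hc
      rw [if_pos hd] at hc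
      have hcd : coeff d p ≠ 0 := mem_support_iff.mp hd
      have hsc : (2:ℂ) ^ (∑ i, d (Sum.inl i)) * (2:ℂ)⁻¹ ^ (∑ j, d (Sum.inr j)) = 1 :=
        mul_right_cancel₀ hcd (by rw [hc, one_mul])
      have hpow : (2:ℂ) ^ (∑ i, d (Sum.inl i)) = (2:ℂ) ^ (∑ j, d (Sum.inr j)) := by
        rw [inv_pow] at hsc
        field_simp at hsc
        exact hsc
      have hnat : (2:ℕ) ^ (∑ i, d (Sum.inl i)) = (2:ℕ) ^ (∑ j, d (Sum.inr j)) := by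
        exact_mod_cast hpow
      exact Nat.pow_right_injective le_rfl hnat
    exact mem_adjoin_of_balanced m l _ d (coeff d p) rfl hw.symm
  · intro hp t ht
    induction hp using Algebra.adjoin_induction with
    | mem q hq =>
      obtain ⟨i, j, rfl⟩ := hq
      rw [map_mul, aeval_X, aeval_X]
      simp only [Sum.elim_inl, Sum.elim_inr]
      rw [smul_mul_smul_comm, mul_inv_cancel₀ ht, one_smul]
    | algebraMap r => simp
    | add x y hx hy ihx ihy => rw [map_add, ihx, ihy]
    | mul x y hx hy ihx ihy => rw [map_mul, ihx, ihy]
end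

section
/- Let m, l be natural numbers and let u ∈ ℂ^{m+1}, w ∈ ℂ^{l+1} with u ≠ 0 and w ≠ 0. Then the orbit {(t•u, t⁻¹•w) : t ∈ ℂ, t ≠ 0} is a closed subset of ℂ^{m+1} × ℂ^{l+1}. -/
/-- If `u ≠ 0` and `w ≠ 0`, the orbit `{(t • u, t⁻¹ • w) : t ≠ 0}` of the ℂ*-action on
`ℂ^{m+1} × ℂ^{l+1}` is closed. -/
theorem orbit_isClosed_of_ne_zero (m l : ℕ)
    (u : Fin (m + 1) → ℂ) (w : Fin (l + 1) → ℂ) (hu : u ≠ 0) (hw : w ≠ 0) :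
    IsClosed {x : (Fin (m + 1) → ℂ) × (Fin (l + 1) → ℂ) |
      ∃ t : ℂ, t ≠ 0 ∧ x = (t • u, t⁻¹ • w)} := by
  obtain ⟨i, hi⟩ : ∃ i, u i ≠ 0 := by
    by_contra h
    push_neg at h
    exact hu (funext h)
  obtain ⟨j, hj⟩ : ∃ j, w j ≠ 0 := by
    by_contra h
    push_neg at h
    exact hw (funext h)
  apply IsSeqClosed.isClosed
  intro x p hmem hx
  choose tseq ht0 hxeq using hmem
  -- limits of coordinates
  have h1 : Filter.Tendsto (fun n => (x n).1 i) Filter.atTop (nhds (p.1 i)) :=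
    (((continuous_apply i).comp continuous_fst).tendsto p).comp hx
  have h2 : Filter.Tendsto (fun n => (x n).2 j) Filter.atTop (nhds (p.2 j)) :=
    (((continuous_apply j).comp continuous_snd).tendsto p).comp hx
  have htseq : ∀ n, tseq n = (x n).1 i / u i := by
    intro n
    have : (x n).1 i = tseq n * u i := by rw [hxeq n]; simp
    rw [this]; field_simp
  have hsseq : ∀ n, (tseq n)⁻¹ = (x n).2 j / w j := by
    intro n
    have : (x n).2 j = (tseq n)⁻¹ * w j := by rw [hxeq n]; simp
    rw [this]; field_simp [ht0 n]
  set t : ℂ := p.1 i / u i with htdef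
  set s : ℂ := p.2 j / w j with hsdef
  have hT : Filter.Tendsto tseq Filter.atTop (nhds t) := by
    simp only [funext htseq]
    exact h1.div_const _
  have hS : Filter.Tendsto (fun n => (tseq n)⁻¹) Filter.atTop (nhds s) := by
    simp only [funext hsseq]
    exact h2.div_const _
  have hts : t * s = 1 := by
    have := (hT.mul hS)
    have h1 : Filter.Tendsto (fun n => tseq n * (tseq n)⁻¹) Filter.atTop (nhds 1) := by
      have : (fun n => tseq n * (tseq n)⁻¹) = fun _ => (1 : ℂ) := by
        funext n; exact mul_inv_cancel₀ (ht0 n)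
      rw [this]; exact tendsto_const_nhds
    exact tendsto_nhds_unique this h1
  have htne : t ≠ 0 := left_ne_zero_of_mul_eq_one hts
  have hsinv : s = t⁻¹ := by field_simp; linear_combination hts
  refine ⟨t, htne, ?_⟩
  have hp1 : p.1 = t • u := by
    have hA : Filter.Tendsto (fun n => (x n).1) Filter.atTop (nhds p.1) :=
      (continuous_fst.tendsto p).comp hx
    have hB : Filter.Tendsto (fun n => (x n).1) Filter.atTop (nhds (t • u)) := by
      have : (fun n => (x n).1) = fun n => tseq n • u := by
        funext n; rw [hxeq n]
      rw [this]
      exact hT.smul tendsto_const_nhds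
    exact tendsto_nhds_unique hA hB
  have hp2 : p.2 = t⁻¹ • w := by
    have hA : Filter.Tendsto (fun n => (x n).2) Filter.atTop (nhds p.2) :=
      (continuous_snd.tendsto p).comp hx
    have hB : Filter.Tendsto (fun n => (x n).2) Filter.atTop (nhds (t⁻¹ • w)) := by
      have : (fun n => (x n).2) = fun n => (tseq n)⁻¹ • w := by
        funext n; rw [hxeq n]
      rw [this, ← hsinv]
      exact hS.smul tendsto_const_nhds
    exact tendsto_nhds_unique hA hB
  exact Prod.ext hp1 hp2
end
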